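/- Let R be any ring and GP the class of Gorenstein AC-projective chain complexes in Ch(R). Then the class GP^⊥ is thick and contains all projective objects of Ch(R). -/

import Mathlib

set_option linter.unusedVariables false

open CategoryTheory CategoryTheory.Limits ZeroObject

universe v u

namespace GorensteinAC





/-! ### General notions in an abelian category -/

section AbelianNotions

variable {𝒜 : Type u} [Category.{v} 𝒜] [Abelian 𝒜]

/-- `Ext¹(X,Y) = 0`, expressed by the (Yoneda) condition that every short exact
sequence `0 → Y → Z → X → 0` splits. -/
def Ext1IsZero (X Y : 𝒜) : Prop :=
  ∀ (Z : 𝒜) (i : Y ⟶ Z) (p : Z ⟶ X) (w : i ≫ p = 0),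
    (ShortComplex.mk i p w).ShortExact → ∃ s : X ⟶ Z, s ≫ p = 𝟙 X

/-- The right `Ext¹`-orthogonal of a class of objects. -/
def rightPerp (S : Set 𝒜) : Set 𝒜 := {Y | ∀ X ∈ S, Ext1IsZero X Y}

/-- The left `Ext¹`-orthogonal of a class of objects. -/
def leftPerp (S : Set 𝒜) : Set 𝒜 := {X | ∀ Y ∈ S, Ext1IsZero X Y}

/-- `(X, Y)` is a cotorsion pair. -/
def IsCotorsionPair (X Y : Set 𝒜) : Prop := Y = rightPerp X ∧ X = leftPerp Y

/-- `(X, Y)` is a complete cotorsion pair: it is a cotorsion pair with enough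
projectives and enough injectives. -/
def IsCompleteCotorsionPair (X Y : Set 𝒜) : Prop :=
  IsCotorsionPair X Y ∧
  (∀ A : 𝒜, ∃ (Y' X' : 𝒜) (i : Y' ⟶ X') (p : X' ⟶ A) (w : i ≫ p = 0),
    (ShortComplex.mk i p w).ShortExact ∧ X' ∈ X ∧ Y' ∈ Y) ∧
  (∀ A : 𝒜, ∃ (Y' X' : 𝒜) (i : A ⟶ Y') (p : Y' ⟶ X') (w : i ≫ p = 0),
    (ShortComplex.mk i p w).ShortExact ∧ X' ∈ X ∧ Y' ∈ Y)

/-- A class is thick if it is closed under direct summands (retracts) and satisfies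
the two-out-of-three property on short exact sequences. -/
def IsThick (W : Set 𝒜) : Prop :=
  (∀ A B : 𝒜, (∃ (s : A ⟶ B) (r : B ⟶ A), s ≫ r = 𝟙 A) → B ∈ W → A ∈ W) ∧
  (∀ S : ShortComplex 𝒜, S.ShortExact →
    ((S.X₁ ∈ W → S.X₂ ∈ W → S.X₃ ∈ W) ∧ (S.X₁ ∈ W → S.X₃ ∈ W → S.X₂ ∈ W) ∧
      (S.X₂ ∈ W → S.X₃ ∈ W → S.X₁ ∈ W)))

/-- A projective cotorsion pair: a complete cotorsion pair `(C, W)` with `W` thick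
and `C ∩ W` exactly the class of projective objects. -/
def IsProjectiveCotorsionPair (C W : Set 𝒜) : Prop :=
  IsCompleteCotorsionPair C W ∧ IsThick W ∧ (C ∩ W = {P : 𝒜 | Projective P})

/-- The sphere complex `S^n(A)`: `A` concentrated in degree `n`. -/
noncomputable def sphere (n : ℤ) (A : 𝒜) : ChainComplex 𝒜 ℤ :=
  (HomologicalComplex.single 𝒜 (ComplexShape.down ℤ) n).obj A

/-- The disk complex `D^n(A)`: `A` in degrees `n` and `n-1` with identity differential. -/
noncomputable def disk (n : ℤ) (A : 𝒜) : ChainComplex 𝒜 ℤ where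
  X i := if i = n ∨ i = n - 1 then A else 0
  d i j :=
    if h : i = n ∧ j = n - 1 then
      eqToHom (by rw [if_pos (Or.inl h.1), if_pos (Or.inr h.2)])
    else 0
  shape i j hij := by
    apply dif_neg
    rintro ⟨rfl, rfl⟩
    exact hij (by simp only [ComplexShape.down_Rel]; omega)
  d_comp_d' i j k hij hjk := by
    by_cases h : i = n ∧ j = n - 1
    · rw [dif_neg (show ¬(j = n ∧ k = n - 1) by rintro ⟨rfl, -⟩; omega), comp_zero]
    · rw [dif_neg h, zero_comp]

end AbelianNotions






section AbelianNotionsB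
variable {𝒜 : Type u} [Category.{v} 𝒜] [Abelian 𝒜]

/-- The complex `𝔻` remains exact after applying the contravariant functor `Hom(-, L)`. -/
def HomIntoExact (𝔻 : ChainComplex 𝒜 ℤ) (L : 𝒜) : Prop :=
  ∀ (n : ℤ) (f : 𝔻.X n ⟶ L), 𝔻.d (n + 1) n ≫ f = 0 →
    ∃ g : 𝔻.X (n - 1) ⟶ L, f = 𝔻.d n (n - 1) ≫ g

/-- The complex `𝔻` remains exact after applying the covariant functor `Hom(A, -)`. -/
def HomFromExact (𝔻 : ChainComplex 𝒜 ℤ) (A : 𝒜) : Prop :=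
  ∀ (n : ℤ) (f : A ⟶ 𝔻.X n), f ≫ 𝔻.d n (n - 1) = 0 →
    ∃ g : A ⟶ 𝔻.X (n + 1), f = g ≫ 𝔻.d (n + 1) n

end AbelianNotionsB

abbrev Ch (R : Type) [Ring R] := ChainComplex (ModuleCat R) ℤ
abbrev DCh (R : Type) [Ring R] := ChainComplex (Ch R) ℤ

def IsTypeFPInfty {S : Type} [Ring S] (F : ModuleCat S) : Prop :=
  ∃ P : ProjectiveResolution F, ∀ n : ℕ, Module.Finite S (P.complex.X n)

/-- A module is countably generated if it has a countable generating set. -/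
def IsCountablyGenerated {S : Type} [Ring S] (M : ModuleCat S) : Prop :=
  ∃ s : Set M, s.Countable ∧ Submodule.span S s = ⊤

/-- A chain complex is countably generated iff each component is countably generated. -/
def IsCountablyGeneratedCx {S : Type} [Ring S] (X : ChainComplex (ModuleCat S) ℤ) : Prop :=
  ∀ n : ℤ, IsCountablyGenerated (X.X n)

/-- A module `M` has projective dimension at most `n` : it admits a projective
resolution vanishing above degree `n`. -/
def HasProjDimLE {S : Type} [Ring S] (M : ModuleCat S) (n : ℕ) : Prop :=
  ∃ P : ProjectiveResolution M, ∀ k : ℕ, n < k → IsZero (P.complex.X k)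

/-- A module is absolutely pure (FP-injective) if `Ext¹(F, E) = 0` for every finitely
presented module `F`. -/
def IsAbsolutelyPure {S : Type} [Ring S] (E : ModuleCat S) : Prop :=
  ∀ F : ModuleCat S, Module.FinitePresentation S F → Ext1IsZero F E

/-- A module is absolutely clean if `Ext¹(F, A) = 0` for every module `F` of type `FP_∞`. -/
def IsAbsolutelyClean {S : Type} [Ring S] (A : ModuleCat S) : Prop :=
  ∀ F : ModuleCat S, IsTypeFPInfty F → Ext1IsZero F A

/-- `M` has absolutely pure (FP-injective) dimension at most `n` : there is an exact
sequence `0 → M → E⁰ → ⋯ → Eⁿ → 0` with each `Eⁱ` absolutely pure. -/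
def HasAbsPureDimLE {S : Type} [Ring S] (M : ModuleCat S) (n : ℕ) : Prop :=
  ∃ D : CochainComplex (ModuleCat S) ℕ,
    Nonempty (D.X 0 ≅ M) ∧ (∀ i : ℕ, D.ExactAt i) ∧
      (∀ i : ℕ, 1 ≤ i → IsAbsolutelyPure (D.X i)) ∧ (∀ i : ℕ, n + 1 < i → IsZero (D.X i))

section Coherent
variable (R : Type) [Ring R]

/-- `R` is left coherent: every finitely generated left ideal is finitely presented. -/
def IsLeftCoherent : Prop :=
  ∀ I : Ideal R, I.FG → Module.FinitePresentation R I

/-- `R` is right coherent: every finitely generated right ideal is finitely presented. -/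
def IsRightCoherent : Prop :=
  ∀ I : Submodule Rᵐᵒᵖ R, I.FG → Module.FinitePresentation Rᵐᵒᵖ I

/-- A Ding-Chen ring: a two-sided coherent ring with finite self-FP-injective dimension
on both sides. -/
def IsDingChen : Prop :=
  IsLeftCoherent R ∧ IsRightCoherent R ∧
    (∃ n : ℕ, HasAbsPureDimLE (ModuleCat.of R R) n) ∧
    ∃ n : ℕ, HasAbsPureDimLE (ModuleCat.of Rᵐᵒᵖ Rᵐᵒᵖ) n

end Coherent

section Modules
variable {R : Type} [Ring R]

open TensorProduct in
noncomputable def ncRel (R : Type) [Ring R] (M : Type) [AddCommGroup M] [Module Rᵐᵒᵖ M]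
    (N : Type) [AddCommGroup N] [Module R N] : AddSubgroup (TensorProduct ℤ M N) :=
  AddSubgroup.closure
    {z | ∃ (r : R) (m : M) (n : N),
      z = (MulOpposite.op r • m) ⊗ₜ[ℤ] n - m ⊗ₜ[ℤ] (r • n)}

def IsLevel (L : ModuleCat R) : Prop :=
  ∀ (K P F : ModuleCat Rᵐᵒᵖ) (i : K ⟶ P) (p : P ⟶ F) (w : i ≫ p = 0),
    (ShortComplex.mk i p w).ShortExact → Projective P → IsTypeFPInfty F →
    ∀ z : TensorProduct ℤ K L,
      TensorProduct.map i.hom.toAddMonoidHom.toIntLinearMap (LinearMap.id (R := ℤ) (M := L)) z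
        ∈ ncRel R P L → z ∈ ncRel R K L

/-- A module `L` is flat if for every monomorphism `K → P` of right modules, the
induced map `K ⊗_R L → P ⊗_R L` is injective. -/
def IsFlat (L : ModuleCat R) : Prop :=
  ∀ (K P : ModuleCat Rᵐᵒᵖ) (i : K ⟶ P), Mono i →
    ∀ z : TensorProduct ℤ K L,
      TensorProduct.map i.hom.toAddMonoidHom.toIntLinearMap (LinearMap.id (R := ℤ) (M := L)) z
        ∈ ncRel R P L → z ∈ ncRel R K L

/-- `M` has flat dimension at most `n` : there is an exact sequence
`0 → Fₙ → ⋯ → F₀ → M → 0` with each `Fᵢ` flat. -/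
def HasFlatDimLE (M : ModuleCat R) (n : ℕ) : Prop :=
  ∃ D : ChainComplex (ModuleCat R) ℕ,
    Nonempty (D.X 0 ≅ M) ∧ (∀ i : ℕ, D.ExactAt i) ∧
      (∀ i : ℕ, 1 ≤ i → IsFlat (D.X i)) ∧ (∀ i : ℕ, n + 1 < i → IsZero (D.X i))

/-- A Gorenstein projective module: a cycle of an exact complex of projective modules
which remains exact under `Hom(-, Q)` for every projective module `Q`. -/
noncomputable def IsGorProjMod (M : ModuleCat R) : Prop :=
  ∃ D : ChainComplex (ModuleCat R) ℤ,
    (∀ n : ℤ, Projective (D.X n)) ∧ (∀ n : ℤ, D.ExactAt n) ∧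
      (∀ Q : ModuleCat R, Projective Q → HomIntoExact D Q) ∧
      Nonempty (M ≅ kernel (D.d 0 (-1)))

/-- A Gorenstein injective module: a cycle of an exact complex of injective modules
which remains exact under `Hom(E, -)` for every injective module `E`. -/
noncomputable def IsGorInjMod (M : ModuleCat R) : Prop :=
  ∃ D : ChainComplex (ModuleCat R) ℤ,
    (∀ n : ℤ, Injective (D.X n)) ∧ (∀ n : ℤ, D.ExactAt n) ∧
      (∀ E : ModuleCat R, Injective E → HomFromExact D E) ∧
      Nonempty (M ≅ kernel (D.d 0 (-1)))

end Modules

section Complexes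
variable {R : Type} [Ring R]

def IsLevelComplex (L : Ch R) : Prop :=
  (∀ n : ℤ, L.ExactAt n) ∧ ∀ n : ℤ, IsLevel (L.cycles n)

/-- A flat chain complex: exact with all cycle modules flat. -/
def IsFlatComplex (F : Ch R) : Prop :=
  (∀ n : ℤ, F.ExactAt n) ∧ ∀ n : ℤ, IsFlat (F.cycles n)

/-- An absolutely clean chain complex: exact with all cycle modules absolutely clean. -/
def IsAbsCleanComplex (A : Ch R) : Prop :=
  (∀ n : ℤ, A.ExactAt n) ∧ ∀ n : ℤ, IsAbsolutelyClean (A.cycles n)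

def IsACAcyclicProjCx (𝔻 : DCh R) : Prop :=
  (∀ n : ℤ, Projective (𝔻.X n)) ∧ (∀ n : ℤ, 𝔻.ExactAt n) ∧
    ∀ L : Ch R, IsLevelComplex L → HomIntoExact 𝔻 L

noncomputable def IsGorACProj (X : Ch R) : Prop :=
  ∃ 𝔻 : DCh R, IsACAcyclicProjCx 𝔻 ∧ Nonempty (X ≅ kernel (𝔻.d 0 (-1)))

/-- A Ding projective chain complex. -/
noncomputable def IsDingProjCx (X : Ch R) : Prop :=
  ∃ 𝔻 : DCh R,
    (∀ n : ℤ, Projective (𝔻.X n)) ∧ (∀ n : ℤ, 𝔻.ExactAt n) ∧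
      (∀ F : Ch R, IsFlatComplex F → HomIntoExact 𝔻 F) ∧
      Nonempty (X ≅ kernel (𝔻.d 0 (-1)))

/-- A Gorenstein projective chain complex. -/
noncomputable def IsGorProjCx (X : Ch R) : Prop :=
  ∃ 𝔻 : DCh R,
    (∀ n : ℤ, Projective (𝔻.X n)) ∧ (∀ n : ℤ, 𝔻.ExactAt n) ∧
      (∀ Q : Ch R, Projective Q → HomIntoExact 𝔻 Q) ∧
      Nonempty (X ≅ kernel (𝔻.d 0 (-1)))

/-- A Gorenstein AC-injective chain complex. -/
noncomputable def IsGorACInj (X : Ch R) : Prop :=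
  ∃ 𝕀 : DCh R,
    (∀ n : ℤ, Injective (𝕀.X n)) ∧ (∀ n : ℤ, 𝕀.ExactAt n) ∧
      (∀ A : Ch R, IsAbsCleanComplex A → HomFromExact 𝕀 A) ∧
      Nonempty (X ≅ kernel (𝕀.d 0 (-1)))

/-- A Gorenstein injective chain complex. -/
noncomputable def IsGorInjCx (X : Ch R) : Prop :=
  ∃ 𝕀 : DCh R,
    (∀ n : ℤ, Injective (𝕀.X n)) ∧ (∀ n : ℤ, 𝕀.ExactAt n) ∧
      (∀ E : Ch R, Injective E → HomFromExact 𝕀 E) ∧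
      Nonempty (X ≅ kernel (𝕀.d 0 (-1)))

def chCard (X : Ch R) : Cardinal := Cardinal.mk (Σ n : ℤ, X.X n)

def dchCard (𝕏 : DCh R) : Cardinal := Cardinal.mk (Σ (n : ℤ) (k : ℤ), (𝕏.X n).X k)

end Complexes






variable {R : Type} [Ring R]

lemma mc_comp_apply {A B C : ModuleCat R} (f : A ⟶ B) (g : B ⟶ C) (x : A) :
    (f ≫ g) x = g (f x) := rfl

lemma mc_zero_apply {A B : ModuleCat R} (x : A) : (0 : A ⟶ B) x = 0 := rfl

/-- A subcomplex of a chain complex of modules: a family of submodules preserved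
by the differentials. -/
structure SubCx (X : Ch R) where
  N : ∀ n : ℤ, Submodule R (X.X n)
  d_mem : ∀ (i j : ℤ), ∀ x ∈ N i, X.d i j x ∈ N j

instance (X : Ch R) : LE (SubCx X) := ⟨fun Q Q' => ∀ n, Q.N n ≤ Q'.N n⟩

/-- A subcomplex, regarded as a chain complex in its own right. -/
noncomputable def SubCx.toCh {X : Ch R} (Q : SubCx X) : Ch R where
  X n := ModuleCat.of R (Q.N n)
  d i j := ModuleCat.ofHom ((X.d i j).hom.restrict (Q.d_mem i j))
  shape i j h := by
    refine ModuleCat.hom_ext (LinearMap.ext fun x => Subtype.ext ?_)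
    have h0 : X.d i j = 0 := X.shape i j h
    show X.d i j x.1 = _
    rw [h0]
    rfl
  d_comp_d' i j k _ _ := by
    refine ModuleCat.hom_ext (LinearMap.ext fun x => Subtype.ext ?_)
    have h0 : X.d j k (X.d i j x.1) = 0 := by
      rw [← mc_comp_apply, X.d_comp_d i j k, mc_zero_apply]
    exact h0

/-- The inclusion of a smaller subcomplex into a larger one. -/
noncomputable def SubCx.incl {X : Ch R} {Q Q' : SubCx X} (h : Q ≤ Q') :
    Q.toCh ⟶ Q'.toCh where
  f n := ModuleCat.ofHom (Submodule.inclusion (h n))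
  comm' i j _ := by
    refine ModuleCat.hom_ext (LinearMap.ext fun x => Subtype.ext ?_)
    rfl

/-- `M` is a transfinite extension (continuous union) of complexes from `S`. -/
noncomputable def IsTransfiniteExtension (S : Set (Ch R)) (M : Ch R) : Prop :=
  ∃ (lam : Ordinal.{0}) (Q : ∀ α : Ordinal, α ≤ lam → SubCx M)
    (mono : ∀ (α α' : Ordinal.{0}) (h : α ≤ α') (h' : α' ≤ lam), Q α (h.trans h') ≤ Q α' h'),
    ((Q 0 zero_le).toCh ∈ S) ∧
    (∀ (α : Ordinal.{0}) (h : α < lam),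
      cokernel (SubCx.incl (mono α (Order.succ α) (Order.le_succ α) (Order.succ_le_of_lt h)))
        ∈ S) ∧
    (∀ (γ : Ordinal.{0}) (h : γ ≤ lam), Order.IsSuccLimit γ →
      ∀ n : ℤ, (Q γ h).N n = ⨆ (α : Ordinal.{0}) (hα : α < γ), (Q α (hα.le.trans h)).N n) ∧
    (∀ n : ℤ, (Q lam le_rfl).N n = ⊤)






variable {R : Type} [Ring R]


/-- A sub-double-complex of a double complex `𝕏`: a family of submodules preserved by
the inner and outer differentials. -/
structure SubDCx (𝕏 : DCh R) where
  N : ∀ (n k : ℤ), Submodule R ((𝕏.X n).X k)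
  d_inner_mem : ∀ (n i j : ℤ), ∀ x ∈ N n i, (𝕏.X n).d i j x ∈ N n j
  d_outer_mem : ∀ (i j k : ℤ), ∀ x ∈ N i k, (𝕏.d i j).f k x ∈ N j k

instance (𝕏 : DCh R) : LE (SubDCx 𝕏) := ⟨fun Q Q' => ∀ n k, Q.N n k ≤ Q'.N n k⟩

/-- Row `n` of a sub-double-complex, as a chain complex. -/
noncomputable def SubDCx.row {𝕏 : DCh R} (Q : SubDCx 𝕏) (n : ℤ) : Ch R where
  X k := ModuleCat.of R (Q.N n k)
  d i j := ModuleCat.ofHom (((𝕏.X n).d i j).hom.restrict (Q.d_inner_mem n i j))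
  shape i j h := by
    refine ModuleCat.hom_ext (LinearMap.ext fun x => Subtype.ext ?_)
    show (𝕏.X n).d i j x.1 = _
    rw [(𝕏.X n).shape i j h]
    rfl
  d_comp_d' i j k _ _ := by
    refine ModuleCat.hom_ext (LinearMap.ext fun x => Subtype.ext ?_)
    have h0 : (𝕏.X n).d j k ((𝕏.X n).d i j x.1) = 0 := by
      rw [← mc_comp_apply, (𝕏.X n).d_comp_d i j k, mc_zero_apply]
    exact h0

/-- A sub-double-complex, regarded as a double complex in its own right. -/
noncomputable def SubDCx.toDCh {𝕏 : DCh R} (Q : SubDCx 𝕏) : DCh R where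
  X n := Q.row n
  d i j :=
    { f := fun k => ModuleCat.ofHom (((𝕏.d i j).f k).hom.restrict (Q.d_outer_mem i j k))
      comm' := fun a b _ => by
        refine ModuleCat.hom_ext (LinearMap.ext fun x => Subtype.ext ?_)
        have h0 := LinearMap.congr_fun (ModuleCat.hom_ext_iff.mp ((𝕏.d i j).comm a b)) x.1
        exact h0 }
  shape i j h := by
    have h0 : 𝕏.d i j = 0 := 𝕏.shape i j h
    refine HomologicalComplex.hom_ext _ _ fun k => ModuleCat.hom_ext (LinearMap.ext fun x => Subtype.ext ?_)
    show (𝕏.d i j).f k x.1 = _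
    rw [h0]
    rfl
  d_comp_d' i j k _ _ := by
    refine HomologicalComplex.hom_ext _ _ fun m => ModuleCat.hom_ext (LinearMap.ext fun x => Subtype.ext ?_)
    have h0 : (𝕏.d j k).f m ((𝕏.d i j).f m x.1) = 0 := by
      have hdd := 𝕏.d_comp_d i j k
      calc (𝕏.d j k).f m ((𝕏.d i j).f m x.1) = ((𝕏.d i j ≫ 𝕏.d j k).f m) x.1 := rfl
        _ = ((0 : 𝕏.X i ⟶ 𝕏.X k).f m) x.1 := by rw [hdd]
        _ = 0 := rfl
    exact h0


variable {R : Type} [Ring R]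

/-- The inclusion of a smaller sub-double-complex into a larger one. -/
noncomputable def SubDCx.incl {𝕏 : DCh R} {Q Q' : SubDCx 𝕏} (h : Q ≤ Q') :
    Q.toDCh ⟶ Q'.toDCh where
  f n :=
    { f := fun k => ModuleCat.ofHom (Submodule.inclusion (h n k))
      comm' := fun i j _ => ModuleCat.hom_ext (LinearMap.ext fun x => Subtype.ext rfl) }
  comm' := fun i j _ =>
    HomologicalComplex.hom_ext _ _ fun k => ModuleCat.hom_ext (LinearMap.ext fun x => Subtype.ext rfl)






section HomCx
variable {𝒜 : Type u} [Category.{v} 𝒜] [Abelian 𝒜]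

/-- The degree-`n` part of the Hom-complex `Hom(X, Y)`:
families of maps `X_p ⟶ Y_{p+n}`. -/
abbrev HChain (X Y : ChainComplex 𝒜 ℤ) (n : ℤ) :=
  ∀ p : ℤ, X.X p ⟶ Y.X (p + n)

/-- The differential of the Hom-complex, `(δ f)_p = d_{p+m} ∘ f_p - (-1)^m f_{p-1} ∘ d_p`. -/
noncomputable def hδ (X Y : ChainComplex 𝒜 ℤ) (m n : ℤ) : HChain X Y m →+ HChain X Y n :=
  AddMonoidHom.mk'
    (fun f p =>
      f p ≫ Y.d (p + m) (p + n) -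
        (m.negOnePow : ℤ) •
          (X.d p (p + n - m) ≫ f (p + n - m) ≫ eqToHom (congrArg Y.X (by omega))))
    (by
      intro f g
      funext p
      simp only [Pi.add_apply, Preadditive.add_comp, Preadditive.comp_add, smul_add]
      abel)

/-- The `n`-th homology of the Hom-complex `Hom(X,Y)`, presented as
(cycles)/(boundaries). -/
noncomputable def homCxHomology (X Y : ChainComplex 𝒜 ℤ) (n : ℤ) : Type v :=
  (hδ X Y n (n - 1)).ker ⧸
    ((hδ X Y (n + 1) n).range.comap (hδ X Y n (n - 1)).ker.subtype)

noncomputable instance (X Y : ChainComplex 𝒜 ℤ) (n : ℤ) : AddCommGroup (homCxHomology X Y n) := by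
  unfold homCxHomology; infer_instance

/-- The suspension `Σⁿ Y`, with `(Σⁿ Y)_k = Y_{k-n}` and differential `(-1)ⁿ d`. -/
noncomputable def shiftC (n : ℤ) (Y : ChainComplex 𝒜 ℤ) : ChainComplex 𝒜 ℤ where
  X k := Y.X (k - n)
  d i j := (n.negOnePow : ℤ) • Y.d (i - n) (j - n)
  shape i j h := by
    rw [Y.shape, smul_zero]
    simp only [ComplexShape.down_Rel] at h ⊢
    omega
  d_comp_d' i j k _ _ := by
    rw [Preadditive.zsmul_comp, Preadditive.comp_zsmul, Y.d_comp_d, smul_zero, smul_zero]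

/-- The group of chain homotopy classes of chain maps, i.e. hom-groups in the
homotopy category `K(𝒜)`. -/
noncomputable def htpyClasses (Z W : ChainComplex 𝒜 ℤ) : Type v :=
  (HomotopyCategory.quotient 𝒜 (ComplexShape.down ℤ)).obj Z ⟶
    (HomotopyCategory.quotient 𝒜 (ComplexShape.down ℤ)).obj W

noncomputable instance (Z W : ChainComplex 𝒜 ℤ) : AddCommGroup (htpyClasses Z W) := by
  unfold htpyClasses; infer_instance

/-- A degreewise split extension of `X` by `Y`. -/
structure DWExtension (X Y : ChainComplex 𝒜 ℤ) where
  Z : ChainComplex 𝒜 ℤ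
  i : Y ⟶ Z
  p : Z ⟶ X
  w : i ≫ p = 0
  shortExact : (ShortComplex.mk i p w).ShortExact
  dwSplit : ∀ k : ℤ, ∃ r : Z.X k ⟶ Y.X k, i.f k ≫ r = 𝟙 (Y.X k)

/-- Equivalence of extensions (the Yoneda equivalence relation on `Ext¹`). -/
def DWExtension.equivRel {X Y : ChainComplex 𝒜 ℤ} (E E' : DWExtension X Y) : Prop :=
  ∃ φ : E.Z ≅ E'.Z, E.i ≫ φ.hom = E'.i ∧ φ.hom ≫ E'.p = E.p

instance dwSetoid (X Y : ChainComplex 𝒜 ℤ) : Setoid (DWExtension X Y) where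
  r := DWExtension.equivRel
  iseqv := by
    constructor
    · intro E
      exact ⟨Iso.refl _, by simp, by simp⟩
    · rintro E E' ⟨φ, h1, h2⟩
      refine ⟨φ.symm, ?_, ?_⟩
      · rw [← h1]; simp
      · rw [← h2]; simp
    · rintro E E' E'' ⟨φ, h1, h2⟩ ⟨ψ, h3, h4⟩
      refine ⟨φ ≪≫ ψ, ?_, ?_⟩
      · simp [reassoc_of% h1, h3]
      · simp [h4, h2]

/-- The pointed set of equivalence classes of degreewise split extensions of `X` by `Y`;
this is `Ext¹_dw(X, Y)`. -/
def DWExtClasses (X Y : ChainComplex 𝒜 ℤ) : Type (max u v) :=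
  Quotient (dwSetoid X Y)


end HomCx



/-! ### Auxiliary development for Statement 12 -/

section AuxAbelian
variable {𝒜 : Type u} [Category.{v} 𝒜] [Abelian 𝒜]

lemma sc'_exact_congr (K : ChainComplex 𝒜 ℤ) {i i' j j' k k' : ℤ} (hi : i = i')
    (hj : j = j') (hk : k = k')
    (h : (K.sc' i j k).Exact) : (K.sc' i' j' k').Exact := by
  subst hi; subst hj; subst hk; exact h

noncomputable def kerCongr (X : ChainComplex 𝒜 ℤ) {i i' j j' : ℤ} (hi : i = i') (hj : j = j') :
    kernel (X.d i j) ≅ kernel (X.d i' j') :=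
  eqToIso (by subst hi; subst hj; rfl)

/-- The workhorse splitting lemma: if `X` is presented as a cokernel of `d21` via an
epimorphism `k` from a projective object, and maps from `D2` to `Y` killed by `d32`
extend over `d21`, then `Ext¹(X, Y) = 0`. -/
lemma lemmaA {D3 D2 D1 X Y : 𝒜} (d32 : D3 ⟶ D2) (d21 : D2 ⟶ D1) (k : D1 ⟶ X)
    (w32 : d32 ≫ d21 = 0) (w21 : d21 ≫ k = 0) (hepi : Epi k) (hproj : Projective D1)
    (hdesc : ∀ {W : 𝒜} (h : D1 ⟶ W), d21 ≫ h = 0 → ∃ s : X ⟶ W, k ≫ s = h)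
    (H : ∀ f : D2 ⟶ Y, d32 ≫ f = 0 → ∃ g : D1 ⟶ Y, f = d21 ≫ g) :
    Ext1IsZero X Y := by
  intro Z i p w hse
  haveI := hse.mono_f
  haveI := hse.epi_g
  haveI := hproj
  haveI := hepi
  set h : D1 ⟶ Z := Projective.factorThru k p with hdef
  have hh : h ≫ p = k := Projective.factorThru_comp k p
  have w1 : (d21 ≫ h) ≫ p = 0 := by rw [Category.assoc, hh, w21]
  have hf' : (hse.exact.lift (d21 ≫ h) w1) ≫ i = d21 ≫ h := hse.exact.lift_f _ _
  obtain ⟨g, hg⟩ := H (hse.exact.lift (d21 ≫ h) w1) (by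
    rw [← cancel_mono i, Category.assoc, hf', zero_comp, ← Category.assoc, w32, zero_comp])
  have w3 : d21 ≫ (h - g ≫ i) = 0 := by
    rw [Preadditive.comp_sub, ← Category.assoc, ← hg, hf', sub_self]
  obtain ⟨s, hs⟩ := hdesc _ w3
  refine ⟨s, ?_⟩
  rw [← cancel_epi k, ← Category.assoc, hs, Preadditive.sub_comp, Category.assoc, hh]
  rw [w, comp_zero, sub_zero, Category.comp_id]

end AuxAbelian

section AuxCh
variable {R : Type} [Ring R]

lemma chEpi_of_surj {A B : Ch R} (f : A ⟶ B) (h : ∀ n, Function.Surjective (f.f n)) :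
    Epi f :=
  HomologicalComplex.epi_of_epi_f f fun n => (ModuleCat.epi_iff_surjective _).2 (h n)

lemma chMono_of_inj {A B : Ch R} (f : A ⟶ B) (h : ∀ n, Function.Injective (f.f n)) :
    Mono f :=
  HomologicalComplex.mono_of_mono_f f fun n => (ModuleCat.mono_iff_injective _).2 (h n)

lemma hom_comp_elem {A B C : Ch R} (f : A ⟶ B) (g : B ⟶ C) (n : ℤ) (x : A.X n) :
    (f ≫ g).f n x = g.f n (f.f n x) := rfl

lemma hom_zero_elem {A B : Ch R} (h : A ⟶ B) (hz : h = 0) (n : ℤ) (x : A.X n) :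
    h.f n x = 0 := by rw [hz]; rfl

/-- Elementwise exactness extracted from exactness of a double complex. -/
lemma dch_exact_elem (𝔻 : DCh R) {i j k : ℤ} (hij : j + 1 = i) (hjk : k + 1 = j)
    (hE : 𝔻.ExactAt j) (n : ℤ) (x : ((𝔻.X j).X n)) (hx : ((𝔻.d j k).f n) x = 0) :
    ∃ y, ((𝔻.d i j).f n) y = x := by
  rw [𝔻.exactAt_iff' i j k ((ChainComplex.prev ℤ j).trans hij)
    ((ChainComplex.next ℤ j).trans (by omega))] at hE
  have h2 := hE.map (HomologicalComplex.eval (ModuleCat R) (ComplexShape.down ℤ) n)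
  rw [ShortComplex.moduleCat_exact_iff] at h2
  exact h2 x hx

/-- The concrete (degreewise) kernel of a chain map. -/
noncomputable def kerCx {A B : Ch R} (g : A ⟶ B) : Ch R :=
  SubCx.toCh
    { N := fun n => LinearMap.ker (g.f n).hom
      d_mem := fun i j x hx => by
        have hc : B.d i j ((g.f i) x) = (g.f j) (A.d i j x) :=
          (ConcreteCategory.congr_hom (g.comm i j) x : _)
        rw [LinearMap.mem_ker] at hx ⊢
        rw [← hc, hx, map_zero] }

/-- The inclusion of the concrete kernel. -/
noncomputable def kerCxIncl {A B : Ch R} (g : A ⟶ B) : kerCx g ⟶ A where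
  f n := ModuleCat.ofHom (LinearMap.ker (g.f n).hom).subtype
  comm' i j _ := rfl

lemma kerCxIncl_comp {A B : Ch R} (g : A ⟶ B) : kerCxIncl g ≫ g = 0 := by
  refine HomologicalComplex.hom_ext _ _ fun n => ModuleCat.hom_ext <| LinearMap.ext fun x => ?_
  exact x.2

/-- Corestriction of a map killed by `g` onto the concrete kernel. -/
noncomputable def kerCorestrict {A B C : Ch R} (g : A ⟶ B) (u : C ⟶ A) (w : u ≫ g = 0) :
    C ⟶ kerCx g where
  f n := ModuleCat.ofHom <| LinearMap.codRestrict (LinearMap.ker (g.f n).hom) (u.f n).hom (fun x => by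
    rw [LinearMap.mem_ker]
    exact hom_zero_elem (u ≫ g) w n x)
  comm' i j _ := by
    refine ModuleCat.hom_ext <| LinearMap.ext fun x => Subtype.ext ?_
    show A.d i j ((u.f i) x) = (u.f j) (C.d i j x)
    exact ConcreteCategory.congr_hom (u.comm i j) x

lemma kerCorestrict_incl {A B C : Ch R} (g : A ⟶ B) (u : C ⟶ A) (w : u ≫ g = 0) :
    kerCorestrict g u w ≫ kerCxIncl g = u :=
  HomologicalComplex.hom_ext _ _ fun n => ModuleCat.hom_ext <| LinearMap.ext fun _ => rfl

/-- The concrete kernel is isomorphic to the categorical kernel. -/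
noncomputable def kerCxIso {A B : Ch R} (g : A ⟶ B) : kerCx g ≅ kernel g where
  hom := kernel.lift g (kerCxIncl g) (kerCxIncl_comp g)
  inv :=
    { f := fun n => ModuleCat.ofHom <| LinearMap.codRestrict (LinearMap.ker (g.f n).hom) ((kernel.ι g).f n).hom
        (fun x => by
          rw [LinearMap.mem_ker]
          exact hom_zero_elem (kernel.ι g ≫ g) (kernel.condition g) n x)
      comm' := fun i j _ => by
        refine ModuleCat.hom_ext <| LinearMap.ext fun x => Subtype.ext ?_
        show A.d i j (((kernel.ι g).f i) x) = ((kernel.ι g).f j) ((kernel g).d i j x)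
        exact ConcreteCategory.congr_hom ((kernel.ι g).comm i j) x }
  hom_inv_id := by
    refine HomologicalComplex.hom_ext _ _ fun n => ModuleCat.hom_ext <| LinearMap.ext fun x => Subtype.ext ?_
    have h1 : ∀ y, ((kernel.lift g (kerCxIncl g) (kerCxIncl_comp g) ≫ kernel.ι g).f n) y
        = ((kerCxIncl g).f n) y := by
      intro y; rw [kernel.lift_ι]
    exact h1 x
  inv_hom_id := by
    rw [← cancel_mono (kernel.ι g)]
    rw [Category.assoc, kernel.lift_ι, Category.id_comp]
    exact HomologicalComplex.hom_ext _ _ fun n => ModuleCat.hom_ext <| LinearMap.ext fun x => rfl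

/-- Descend a linear map along a surjection whose kernel it kills. -/
noncomputable def descAux {M N W : Type*} [AddCommGroup M] [AddCommGroup N] [AddCommGroup W]
    [Module R M] [Module R N] [Module R W] (k : M →ₗ[R] N) (hk : Function.Surjective k)
    (h : M →ₗ[R] W) (hker : ∀ x, k x = 0 → h x = 0) : N →ₗ[R] W where
  toFun y := h (Function.surjInv hk y)
  map_add' a b := by
    show h (Function.surjInv hk (a + b))
      = h (Function.surjInv hk a) + h (Function.surjInv hk b)
    have e : h (Function.surjInv hk (a + b) - (Function.surjInv hk a + Function.surjInv hk b))
        = 0 := hker _ (by simp [map_sub, map_add, Function.surjInv_eq hk, sub_eq_zero])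
    rw [map_sub, sub_eq_zero] at e
    rw [e, map_add]
  map_smul' r a := by
    show h (Function.surjInv hk (r • a)) = r • h (Function.surjInv hk a)
    have e : h (Function.surjInv hk (r • a) - r • Function.surjInv hk a) = 0 :=
      hker _ (by simp [map_sub, map_smul, Function.surjInv_eq hk, sub_eq_zero])
    rw [map_sub, sub_eq_zero] at e
    rw [e, map_smul]

lemma descAux_apply {M N W : Type*} [AddCommGroup M] [AddCommGroup N] [AddCommGroup W]
    [Module R M] [Module R N] [Module R W] (k : M →ₗ[R] N) (hk : Function.Surjective k)
    (h : M →ₗ[R] W) (hker : ∀ x, k x = 0 → h x = 0) (x : M) :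
    descAux k hk h hker (k x) = h x := by
  have e : h (Function.surjInv hk (k x) - x) = 0 :=
    hker _ (by simp [map_sub, Function.surjInv_eq hk, sub_eq_zero])
  rw [map_sub, sub_eq_zero] at e
  exact e

/-- The corestriction onto the concrete kernel is an (explicit) cokernel of the previous
differential, under elementwise exactness hypotheses. -/
lemma descLemma {A B C D E : Ch R} (g : A ⟶ B) (u : C ⟶ A) (wug : u ≫ g = 0)
    (v : D ⟶ C)
    (hsurj : ∀ (m : ℤ) (x : A.X m), (g.f m) x = 0 → ∃ y, (u.f m) y = x)
    (hex : ∀ (m : ℤ) (x : C.X m), (u.f m) x = 0 → ∃ y, (v.f m) y = x)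
    (h : C ⟶ E) (hh : v ≫ h = 0) :
    ∃ s : kerCx g ⟶ E, kerCorestrict g u wug ≫ s = h := by
  have surj : ∀ m, Function.Surjective ((kerCorestrict g u wug).f m) := by
    intro m z
    obtain ⟨y, hy⟩ := hsurj m z.1 (LinearMap.mem_ker.1 z.2)
    exact ⟨y, Subtype.ext hy⟩
  have hker : ∀ m (x : C.X m), ((kerCorestrict g u wug).f m) x = 0 → (h.f m) x = 0 := by
    intro m x hx
    have hux : (u.f m) x = 0 := congrArg Subtype.val hx
    obtain ⟨y, hy⟩ := hex m x hux
    rw [← hy]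
    exact hom_zero_elem (v ≫ h) hh m y
  refine ⟨{
      f := fun m => by
        exact ModuleCat.ofHom <| descAux (R := R) (W := ↥(E.X m))
          ((kerCorestrict g u wug).f m).hom (surj m) (h.f m).hom (hker m),
      comm' := fun i j _ => ?_ }, ?_⟩
  · refine ModuleCat.hom_ext <| LinearMap.ext fun z => ?_
    obtain ⟨x, rfl⟩ := surj i z
    have hstep : (kerCx g).d i j (((kerCorestrict g u wug).f i) x)
        = ((kerCorestrict g u wug).f j) (C.d i j x) := by
      refine Subtype.ext ?_
      show A.d i j ((u.f i) x) = (u.f j) (C.d i j x)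
      exact ConcreteCategory.congr_hom (u.comm i j) x
    show E.d i j (descAux _ (surj i) (h.f i).hom (hker i) (((kerCorestrict g u wug).f i) x))
      = descAux _ (surj j) (h.f j).hom (hker j) ((kerCx g).d i j (((kerCorestrict g u wug).f i) x))
    rw [hstep, descAux_apply, descAux_apply]
    exact ConcreteCategory.congr_hom (h.comm i j) x
  · exact HomologicalComplex.hom_ext _ _ fun m => ModuleCat.hom_ext <| LinearMap.ext fun x =>
      descAux_apply ((kerCorestrict g u wug).f m).hom (surj m) (h.f m).hom (hker m) x

/-- Index-flexible form of `HomIntoExact`. -/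
lemma homIntoExact_gen {𝔻 : DCh R} {L : Ch R} (h : HomIntoExact 𝔻 L) (i j k : ℤ)
    (hij : i = j + 1) (hjk : k = j - 1) (f : 𝔻.X j ⟶ L) (hf : 𝔻.d i j ≫ f = 0) :
    ∃ g : 𝔻.X k ⟶ L, f = 𝔻.d j k ≫ g := by
  subst hij; subst hjk; exact h j f hf

/-- Shift of a `ℤ`-indexed chain complex (of complexes). -/
noncomputable def shiftD (m : ℤ) (𝔻 : DCh R) : DCh R where
  X n := 𝔻.X (n + m)
  d i j := 𝔻.d (i + m) (j + m)
  shape i j h := 𝔻.shape _ _ (by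
    simp only [ComplexShape.down_Rel] at h ⊢
    omega)
  d_comp_d' i j k _ _ := 𝔻.d_comp_d _ _ _

lemma shiftD_exactAt (𝔻 : DCh R) (m n : ℤ) (h : 𝔻.ExactAt (n + m)) :
    (shiftD m 𝔻).ExactAt n := by
  rw [HomologicalComplex.exactAt_iff' (shiftD m 𝔻) (n + 1) n (n - 1)
    (ChainComplex.prev ℤ n) (ChainComplex.next ℤ n)]
  rw [HomologicalComplex.exactAt_iff' 𝔻 (n + m + 1) (n + m) (n + m - 1)
    (ChainComplex.prev ℤ (n + m)) (ChainComplex.next ℤ (n + m))] at h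
  exact sc'_exact_congr 𝔻 (show n + m + 1 = n + 1 + m by ring) rfl
    (show n + m - 1 = n - 1 + m by ring) h

lemma shiftD_acyclic {𝔻 : DCh R} (h : IsACAcyclicProjCx 𝔻) (m : ℤ) :
    IsACAcyclicProjCx (shiftD m 𝔻) := by
  obtain ⟨h1, h2, h3⟩ := h
  refine ⟨fun n => h1 (n + m), fun n => shiftD_exactAt 𝔻 m n (h2 (n + m)), ?_⟩
  intro L hL n f hf
  exact homIntoExact_gen (h3 L hL) (n + 1 + m) (n + m) (n - 1 + m)
    (by ring) (by ring) f hf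

/-- All kernels of differentials of an AC-acyclic complex of projectives are
Gorenstein AC-projective. -/
lemma gp_kernel {𝔻 : DCh R} (hAC : IsACAcyclicProjCx 𝔻) {i j : ℤ} (hij : j + 1 = i) :
    IsGorACProj (kernel (𝔻.d i j)) := by
  refine ⟨shiftD i 𝔻, shiftD_acyclic hAC i, ⟨?_⟩⟩
  exact (kerCongr 𝔻 (show i = 0 + i by ring) (show j = -1 + i by omega) :
    kernel (𝔻.d i j) ≅ kernel ((shiftD i 𝔻).d 0 (-1)))

lemma gp_kerCx {𝔻 : DCh R} (hAC : IsACAcyclicProjCx 𝔻) {i j : ℤ} (hij : j + 1 = i) :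
    IsGorACProj (kerCx (𝔻.d i j)) := by
  obtain ⟨𝔼, h𝔼, ⟨e⟩⟩ := gp_kernel hAC hij
  exact ⟨𝔼, h𝔼, ⟨kerCxIso (𝔻.d i j) ≪≫ e⟩⟩

end AuxCh
section AuxW
variable {R : Type} [Ring R]

/-- The class of complexes `Y` such that `Hom(-, Y)` leaves every AC-acyclic complex of
projectives exact. This will be shown to coincide with `GP^⊥`. -/
def WClass (R : Type) [Ring R] : Set (Ch R) :=
  {Y | ∀ 𝔻 : DCh R, IsACAcyclicProjCx 𝔻 → HomIntoExact 𝔻 Y}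

lemma wclass_subset_perp : WClass R ⊆ rightPerp {X : Ch R | IsGorACProj X} := by
  intro Y hY X hX
  obtain ⟨𝔻, hAC, ⟨e⟩⟩ := hX
  have hsurj0 : ∀ (m : ℤ) (x : ((𝔻.X 0).X m)), ((𝔻.d 0 (-1)).f m) x = 0 →
      ∃ y, ((𝔻.d 1 0).f m) y = x :=
    fun m x hx => dch_exact_elem 𝔻 (by norm_num) (by norm_num) (hAC.2.1 0) m x hx
  have hex1 : ∀ (m : ℤ) (x : ((𝔻.X 1).X m)), ((𝔻.d 1 0).f m) x = 0 →
      ∃ y, ((𝔻.d 2 1).f m) y = x :=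
    fun m x hx => dch_exact_elem 𝔻 (by norm_num) (by norm_num) (hAC.2.1 1) m x hx
  set k0 : 𝔻.X 1 ⟶ kerCx (𝔻.d 0 (-1)) :=
    kerCorestrict (𝔻.d 0 (-1)) (𝔻.d 1 0) (𝔻.d_comp_d 1 0 (-1)) with hk0
  haveI hek0 : Epi k0 := chEpi_of_surj _ (fun m z => by
    obtain ⟨y, hy⟩ := hsurj0 m z.1 (LinearMap.mem_ker.1 z.2)
    exact ⟨y, Subtype.ext hy⟩)
  set k : 𝔻.X 1 ⟶ X := k0 ≫ ((kerCxIso (𝔻.d 0 (-1))).hom ≫ e.inv) with hk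
  have hepi : Epi k := by rw [hk]; infer_instance
  have w21 : 𝔻.d 2 1 ≫ k = 0 := by
    have h21 : 𝔻.d 2 1 ≫ k0 = 0 := by
      refine HomologicalComplex.hom_ext _ _ fun m => ModuleCat.hom_ext <| LinearMap.ext fun x => Subtype.ext ?_
      show ((𝔻.d 1 0).f m) (((𝔻.d 2 1).f m) x) = 0
      exact hom_zero_elem (𝔻.d 2 1 ≫ 𝔻.d 1 0) (𝔻.d_comp_d 2 1 0) m x
    rw [hk, ← Category.assoc, h21, zero_comp]
  have hdesc : ∀ {W : Ch R} (h : 𝔻.X 1 ⟶ W), 𝔻.d 2 1 ≫ h = 0 → ∃ s : X ⟶ W, k ≫ s = h := by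
    intro W h hw
    obtain ⟨s0, hs0⟩ := descLemma (𝔻.d 0 (-1)) (𝔻.d 1 0) (𝔻.d_comp_d 1 0 (-1)) (𝔻.d 2 1)
      hsurj0 hex1 h hw
    refine ⟨e.hom ≫ (kerCxIso (𝔻.d 0 (-1))).inv ≫ s0, ?_⟩
    rw [hk]
    simp only [Category.assoc, Iso.inv_hom_id_assoc, Iso.hom_inv_id_assoc]
    exact hs0
  have H : ∀ f : 𝔻.X 2 ⟶ Y, 𝔻.d 3 2 ≫ f = 0 → ∃ g : 𝔻.X 1 ⟶ Y, f = 𝔻.d 2 1 ≫ g :=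
    fun f hf => homIntoExact_gen (hY 𝔻 hAC) 3 2 1 (by norm_num) (by norm_num) f hf
  exact lemmaA (𝔻.d 3 2) (𝔻.d 2 1) k (𝔻.d_comp_d 3 2 1) w21 hepi (hAC.1 1) hdesc H

lemma homInto_retract {𝔻 : DCh R} {Y Y' : Ch R} (h : HomIntoExact 𝔻 Y')
    (s : Y ⟶ Y') (r : Y' ⟶ Y) (hsr : s ≫ r = 𝟙 Y) : HomIntoExact 𝔻 Y := by
  intro n f hf
  obtain ⟨g, hg⟩ := h n (f ≫ s) (by rw [← Category.assoc, hf, zero_comp])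
  refine ⟨g ≫ r, ?_⟩
  calc f = f ≫ 𝟙 Y := (Category.comp_id f).symm
    _ = f ≫ s ≫ r := by rw [← hsr]
    _ = (f ≫ s) ≫ r := (Category.assoc _ _ _).symm
    _ = (𝔻.d n (n - 1) ≫ g) ≫ r := by rw [hg]
    _ = 𝔻.d n (n - 1) ≫ g ≫ r := Category.assoc _ _ _

lemma homInto_two_of_three_mid {𝔻 : DCh R} (hAC : IsACAcyclicProjCx 𝔻)
    {S : ShortComplex (Ch R)} (hS : S.ShortExact)
    (h1 : HomIntoExact 𝔻 S.X₁) (h3 : HomIntoExact 𝔻 S.X₃) : HomIntoExact 𝔻 S.X₂ := by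
  intro n f hf
  haveI := hS.mono_f
  haveI := hS.epi_g
  haveI := hAC.1 (n - 1)
  obtain ⟨g3, hg3⟩ := h3 n (f ≫ S.g) (by rw [← Category.assoc, hf, zero_comp])
  set gt : 𝔻.X (n - 1) ⟶ S.X₂ := Projective.factorThru g3 S.g with hgt
  have hgtg : gt ≫ S.g = g3 := Projective.factorThru_comp _ _
  have w : (f - 𝔻.d n (n - 1) ≫ gt) ≫ S.g = 0 := by
    rw [Preadditive.sub_comp, Category.assoc, hgtg, ← hg3, sub_self]
  have huf : hS.exact.lift _ w ≫ S.f = f - 𝔻.d n (n - 1) ≫ gt := hS.exact.lift_f _ _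
  set u := hS.exact.lift _ w with hu
  have wu : 𝔻.d (n + 1) n ≫ u = 0 := by
    have h0 : (𝔻.d (n + 1) n ≫ u) ≫ S.f = 0 := by
      rw [Category.assoc, huf, Preadditive.comp_sub, hf, zero_sub, ← Category.assoc,
        𝔻.d_comp_d, zero_comp, neg_zero]
    rw [← cancel_mono S.f, h0, zero_comp]
  obtain ⟨v, hv⟩ := h1 n u wu
  refine ⟨gt + v ≫ S.f, ?_⟩
  rw [Preadditive.comp_add, ← Category.assoc, ← hv, huf]
  abel

lemma homInto_two_of_three_right {𝔻 : DCh R} (hAC : IsACAcyclicProjCx 𝔻)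
    {S : ShortComplex (Ch R)} (hS : S.ShortExact)
    (h1 : HomIntoExact 𝔻 S.X₁) (h2 : HomIntoExact 𝔻 S.X₂) : HomIntoExact 𝔻 S.X₃ := by
  intro n f hf
  haveI := hS.mono_f
  haveI := hS.epi_g
  haveI := hAC.1 n
  set ft := Projective.factorThru f S.g with hft
  have hftg : ft ≫ S.g = f := Projective.factorThru_comp _ _
  have w : (𝔻.d (n + 1) n ≫ ft) ≫ S.g = 0 := by rw [Category.assoc, hftg, hf]
  have hwmf : hS.exact.lift _ w ≫ S.f = 𝔻.d (n + 1) n ≫ ft := hS.exact.lift_f _ _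
  set wm := hS.exact.lift _ w with hwmdef
  have wwm : 𝔻.d (n + 2) (n + 1) ≫ wm = 0 := by
    have h0 : (𝔻.d (n + 2) (n + 1) ≫ wm) ≫ S.f = 0 := by
      rw [Category.assoc, hwmf, ← Category.assoc, 𝔻.d_comp_d, zero_comp]
    rw [← cancel_mono S.f, h0, zero_comp]
  obtain ⟨v, hv⟩ := homIntoExact_gen h1 (n + 2) (n + 1) n (by ring) (by ring) wm wwm
  have w2 : 𝔻.d (n + 1) n ≫ (ft - v ≫ S.f) = 0 := by
    rw [Preadditive.comp_sub, ← Category.assoc, ← hv, hwmf, sub_self]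
  obtain ⟨g2, hg2⟩ := h2 n (ft - v ≫ S.f) w2
  refine ⟨g2 ≫ S.g, ?_⟩
  calc f = (ft - v ≫ S.f) ≫ S.g := by
        rw [Preadditive.sub_comp, Category.assoc, S.zero, comp_zero, sub_zero, hftg]
    _ = (𝔻.d n (n - 1) ≫ g2) ≫ S.g := by rw [← hg2]
    _ = 𝔻.d n (n - 1) ≫ g2 ≫ S.g := Category.assoc _ _ _

lemma homInto_two_of_three_left {𝔻 : DCh R} (hAC : IsACAcyclicProjCx 𝔻)
    {S : ShortComplex (Ch R)} (hS : S.ShortExact)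
    (h2 : HomIntoExact 𝔻 S.X₂) (h3 : HomIntoExact 𝔻 S.X₃) : HomIntoExact 𝔻 S.X₁ := by
  intro n f hf
  haveI := hS.mono_f
  haveI := hS.epi_g
  haveI := hAC.1 (n - 2)
  obtain ⟨g, hg⟩ := h2 n (f ≫ S.f) (by rw [← Category.assoc, hf, zero_comp])
  have w3 : 𝔻.d n (n - 1) ≫ (g ≫ S.g) = 0 := by
    rw [← Category.assoc, ← hg, Category.assoc, S.zero, comp_zero]
  obtain ⟨h', hh'⟩ := homIntoExact_gen h3 n (n - 1) (n - 2) (by ring) (by ring) (g ≫ S.g) w3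
  set ht := Projective.factorThru h' S.g with hht
  have hhtg : ht ≫ S.g = h' := Projective.factorThru_comp _ _
  have w4 : (g - 𝔻.d (n - 1) (n - 2) ≫ ht) ≫ S.g = 0 := by
    rw [Preadditive.sub_comp, Category.assoc, hhtg, ← hh', sub_self]
  have huf : hS.exact.lift _ w4 ≫ S.f = g - 𝔻.d (n - 1) (n - 2) ≫ ht := hS.exact.lift_f _ _
  refine ⟨hS.exact.lift _ w4, ?_⟩
  rw [← cancel_mono S.f, Category.assoc, huf, Preadditive.comp_sub, ← hg,
    ← Category.assoc, 𝔻.d_comp_d, zero_comp, sub_zero]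

end AuxW
section AuxPush
variable {R : Type} [Ring R]
variable {Z P' Y : Ch R} (ι : Z ⟶ P') (fb : Z ⟶ Y)

/-- The degreewise submodule of relations defining the pushout. -/
noncomputable def pushN (n : ℤ) : Submodule R (↥(Y.X n) × ↥(P'.X n)) :=
  LinearMap.range ((fb.f n).hom.prod (-(ι.f n).hom))

/-- The pushout of `fb` along `ι`, constructed degreewise. -/
noncomputable def pushCx : Ch R where
  X n := ModuleCat.of R ((↥(Y.X n) × ↥(P'.X n)) ⧸ pushN ι fb n)
  d i j := ModuleCat.ofHom <| Submodule.mapQ (pushN ι fb i) (pushN ι fb j)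
    ((Y.d i j).hom.prodMap (P'.d i j).hom) (by
      rintro x ⟨z, rfl⟩
      refine ⟨Z.d i j z, ?_⟩
      have h1 : Y.d i j ((fb.f i) z) = (fb.f j) (Z.d i j z) :=
        ConcreteCategory.congr_hom (fb.comm i j) z
      have h2 : P'.d i j ((ι.f i) z) = (ι.f j) (Z.d i j z) :=
        ConcreteCategory.congr_hom (ι.comm i j) z
      show ((fb.f j) (Z.d i j z), -((ι.f j) (Z.d i j z)))
        = ((Y.d i j).hom.prodMap (P'.d i j).hom) ((fb.f i) z, -((ι.f i) z))
      simp [LinearMap.prodMap_apply, h1, h2])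
  shape i j h := by
    have hy : Y.d i j = 0 := Y.shape i j h
    have hp : P'.d i j = 0 := P'.shape i j h
    refine ModuleCat.hom_ext <| LinearMap.ext fun x => ?_
    obtain ⟨y, rfl⟩ := Submodule.Quotient.mk_surjective _ x
    show Submodule.Quotient.mk (Y.d i j y.1, P'.d i j y.2) = 0
    rw [hy, hp]
    exact (Submodule.Quotient.mk_eq_zero _).2 (zero_mem _)
  d_comp_d' i j k _ _ := by
    refine ModuleCat.hom_ext <| LinearMap.ext fun x => ?_
    obtain ⟨y, rfl⟩ := Submodule.Quotient.mk_surjective _ x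
    show Submodule.Quotient.mk (Y.d j k (Y.d i j y.1), P'.d j k (P'.d i j y.2)) = 0
    have h1 : Y.d j k (Y.d i j y.1) = 0 := ConcreteCategory.congr_hom (Y.d_comp_d i j k) y.1
    have h2 : P'.d j k (P'.d i j y.2) = 0 := ConcreteCategory.congr_hom (P'.d_comp_d i j k) y.2
    rw [h1, h2]
    exact (Submodule.Quotient.mk_eq_zero _).2 (zero_mem _)

/-- The structural map from `Y` into the pushout. -/
noncomputable def pushInl : Y ⟶ pushCx ι fb where
  f n := ModuleCat.ofHom <| (pushN ι fb n).mkQ.comp (LinearMap.inl R _ _)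
  comm' i j _ := by
    refine ModuleCat.hom_ext <| LinearMap.ext fun y => ?_
    show Submodule.Quotient.mk ((Y.d i j) y, P'.d i j 0)
      = Submodule.Quotient.mk ((Y.d i j) y, (0 : ↥(P'.X j)))
    rw [map_zero]

/-- The structural map from `P'` into the pushout. -/
noncomputable def pushInr : P' ⟶ pushCx ι fb where
  f n := ModuleCat.ofHom <| (pushN ι fb n).mkQ.comp (LinearMap.inr R _ _)
  comm' i j _ := by
    refine ModuleCat.hom_ext <| LinearMap.ext fun y => ?_
    show Submodule.Quotient.mk (Y.d i j 0, (P'.d i j) y)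
      = Submodule.Quotient.mk ((0 : ↥(Y.X j)), (P'.d i j) y)
    rw [map_zero]

lemma pushSquare : fb ≫ pushInl ι fb = ι ≫ pushInr ι fb := by
  refine HomologicalComplex.hom_ext _ _ fun n => ModuleCat.hom_ext <| LinearMap.ext fun z => ?_
  show Submodule.Quotient.mk ((fb.f n) z, (0 : ↥(P'.X n)))
    = Submodule.Quotient.mk ((0 : ↥(Y.X n)), (ι.f n) z)
  rw [Submodule.Quotient.eq]
  refine ⟨z, ?_⟩
  have hzz : ((fb.f n).hom.prod (-(ι.f n).hom)) z = ((fb.f n) z, -((ι.f n) z)) := rfl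
  rw [hzz]
  simp

/-- The projection from the pushout onto `Z'`. -/
noncomputable def pushRho {Z' : Ch R} (ρ : P' ⟶ Z') (hw : ι ≫ ρ = 0) :
    pushCx ι fb ⟶ Z' where
  f n := ModuleCat.ofHom <| Submodule.liftQ (pushN ι fb n) ((ρ.f n).hom.comp (LinearMap.snd R _ _)) (by
    rintro x ⟨z, rfl⟩
    show (ρ.f n) (-((ι.f n) z)) = 0
    have h0 : (ρ.f n) ((ι.f n) z) = 0 := hom_zero_elem (ι ≫ ρ) hw n z
    rw [map_neg, h0, neg_zero])
  comm' i j _ := by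
    refine ModuleCat.hom_ext <| LinearMap.ext fun x => ?_
    obtain ⟨y, rfl⟩ := Submodule.Quotient.mk_surjective _ x
    show Z'.d i j ((ρ.f i) y.2) = (ρ.f j) ((P'.d i j) y.2)
    exact ConcreteCategory.congr_hom (ρ.comm i j) y.2

lemma pushW {Z' : Ch R} (ρ : P' ⟶ Z') (hw : ι ≫ ρ = 0) :
    pushInl ι fb ≫ pushRho ι fb ρ hw = 0 := by
  refine HomologicalComplex.hom_ext _ _ fun n => ModuleCat.hom_ext <| LinearMap.ext fun y => ?_
  show (ρ.f n) (0 : ↥(P'.X n)) = 0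
  rw [map_zero]

lemma push_shortExact (hιinj : ∀ n, Function.Injective (ι.f n))
    {Z' : Ch R} (ρ : P' ⟶ Z') (hw : ι ≫ ρ = 0)
    (hρsurj : ∀ n, Function.Surjective (ρ.f n))
    (hexact : ∀ n (x : ↥(P'.X n)), (ρ.f n) x = 0 → ∃ z, (ι.f n) z = x) :
    (ShortComplex.mk (pushInl ι fb) (pushRho ι fb ρ hw) (pushW ι fb ρ hw)).ShortExact := by
  rw [HomologicalComplex.shortExact_iff_degreewise_shortExact]
  intro n
  have hinj : Function.Injective ((pushInl ι fb).f n) := by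
    intro a b hab
    have h0 : ((pushInl ι fb).f n) (a - b) = 0 := by rw [map_sub, hab, sub_self]
    have h1 : ((a - b : ↥(Y.X n)), (0 : ↥(P'.X n))) ∈ pushN ι fb n := by
      rwa [← Submodule.Quotient.mk_eq_zero]
    obtain ⟨z, hz⟩ := h1
    have h2 : -((ι.f n) z) = 0 := congrArg Prod.snd hz
    have h2' : (ι.f n) z = 0 := neg_eq_zero.1 h2
    have h3 : z = 0 := hιinj n (by rw [h2', map_zero])
    have h4 : (fb.f n) z = a - b := congrArg Prod.fst hz
    rw [h3, map_zero] at h4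
    exact sub_eq_zero.1 h4.symm
  haveI : Mono ((ShortComplex.mk (pushInl ι fb) (pushRho ι fb ρ hw) (pushW ι fb ρ hw)).map
      (HomologicalComplex.eval (ModuleCat R) (ComplexShape.down ℤ) n)).f :=
    (ModuleCat.mono_iff_injective _).2 hinj
  haveI : Epi ((ShortComplex.mk (pushInl ι fb) (pushRho ι fb ρ hw) (pushW ι fb ρ hw)).map
      (HomologicalComplex.eval (ModuleCat R) (ComplexShape.down ℤ) n)).g :=
    (ModuleCat.epi_iff_surjective _).2 (fun z => by
      obtain ⟨p, hp⟩ := hρsurj n z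
      exact ⟨Submodule.Quotient.mk ((0 : ↥(Y.X n)), p), hp⟩)
  constructor
  rw [ShortComplex.moduleCat_exact_iff]
  intro u hu
  obtain ⟨y, rfl⟩ := Submodule.Quotient.mk_surjective _ u
  have hρy : (ρ.f n) y.2 = 0 := hu
  obtain ⟨z, hz⟩ := hexact n y.2 hρy
  refine ⟨y.1 + (fb.f n) z, ?_⟩
  show Submodule.Quotient.mk ((y.1 + (fb.f n) z, (0 : ↥(P'.X n)))) = Submodule.Quotient.mk y
  rw [Submodule.Quotient.eq]
  refine ⟨z, ?_⟩
  have hzz : ((fb.f n).hom.prod (-(ι.f n).hom)) z = ((fb.f n) z, -((ι.f n) z)) := rfl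
  rw [hzz, hz]
  show ((fb.f n) z, -y.2) = (y.1 + (fb.f n) z - y.1, 0 - y.2)
  rw [add_sub_cancel_left, zero_sub]

/-- Yoneda-style: maps extend along the inclusion of a "kernel" subcomplex into `P'`
whenever `Ext¹` of the quotient vanishes. -/
lemma extend_of_ext1 {Z'' : Ch R} (ρ : P' ⟶ Z'') (hw : ι ≫ ρ = 0)
    (hιinj : ∀ n, Function.Injective (ι.f n))
    (hρsurj : ∀ n, Function.Surjective (ρ.f n))
    (hexact : ∀ n (x : ↥(P'.X n)), (ρ.f n) x = 0 → ∃ z, (ι.f n) z = x)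
    (hY : Ext1IsZero Z'' Y) : ∃ g : P' ⟶ Y, ι ≫ g = fb := by
  have hse := push_shortExact ι fb hιinj ρ hw hρsurj hexact
  obtain ⟨s, hs⟩ := hY (pushCx ι fb) (pushInl ι fb) (pushRho ι fb ρ hw) (pushW ι fb ρ hw) hse
  haveI := hse.mono_f
  haveI := hse.epi_g
  have wu : (𝟙 (pushCx ι fb) - pushRho ι fb ρ hw ≫ s) ≫ pushRho ι fb ρ hw = 0 := by
    rw [Preadditive.sub_comp, Category.id_comp, Category.assoc, hs, Category.comp_id, sub_self]
  have hrf : hse.exact.lift _ wu ≫ pushInl ι fb = 𝟙 (pushCx ι fb) - pushRho ι fb ρ hw ≫ s :=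
    hse.exact.lift_f _ _
  have hretr : pushInl ι fb ≫ hse.exact.lift _ wu = 𝟙 Y := by
    rw [← cancel_mono (pushInl ι fb), Category.assoc, hrf, Preadditive.comp_sub,
      Category.comp_id, ← Category.assoc, pushW, zero_comp, sub_zero, Category.id_comp]
  refine ⟨pushInr ι fb ≫ hse.exact.lift _ wu, ?_⟩
  rw [← Category.assoc, ← pushSquare, Category.assoc, hretr, Category.comp_id]

end AuxPush

section AuxPerpW
variable {R : Type} [Ring R]

lemma perp_subset_wclass : rightPerp {X : Ch R | IsGorACProj X} ⊆ WClass R := by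
  intro Y hY 𝔻 hAC n f hf
  have hsurj : ∀ (m : ℤ) (x : ((𝔻.X (n - 1)).X m)), ((𝔻.d (n - 1) (n - 2)).f m) x = 0 →
      ∃ y, ((𝔻.d n (n - 1)).f m) y = x :=
    fun m x hx => dch_exact_elem 𝔻 (by ring) (by ring) (hAC.2.1 (n - 1)) m x hx
  have hex : ∀ (m : ℤ) (x : ((𝔻.X n).X m)), ((𝔻.d n (n - 1)).f m) x = 0 →
      ∃ y, ((𝔻.d (n + 1) n).f m) y = x :=
    fun m x hx => dch_exact_elem 𝔻 (by ring) (by ring) (hAC.2.1 n) m x hx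
  obtain ⟨fb, hfb⟩ := descLemma (𝔻.d (n - 1) (n - 2)) (𝔻.d n (n - 1))
    (𝔻.d_comp_d _ _ _) (𝔻.d (n + 1) n) hsurj hex f hf
  set ρ := kerCorestrict (𝔻.d (n - 2) (n - 3)) (𝔻.d (n - 1) (n - 2))
    (𝔻.d_comp_d _ _ _) with hρ
  have hιinj : ∀ m, Function.Injective ((kerCxIncl (𝔻.d (n - 1) (n - 2))).f m) :=
    fun m x y hxy => Subtype.ext hxy
  have hρsurj : ∀ m, Function.Surjective (ρ.f m) := by
    intro m z
    obtain ⟨y, hy⟩ := dch_exact_elem 𝔻 (i := n - 1) (j := n - 2) (k := n - 3)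
      (by ring) (by ring) (hAC.2.1 (n - 2)) m z.1 (LinearMap.mem_ker.1 z.2)
    exact ⟨y, Subtype.ext hy⟩
  have hexact : ∀ m (x : ((𝔻.X (n - 1)).X m)), (ρ.f m) x = 0 →
      ∃ z, ((kerCxIncl (𝔻.d (n - 1) (n - 2))).f m) z = x := by
    intro m x hx
    have h0 : ((𝔻.d (n - 1) (n - 2)).f m) x = 0 := congrArg Subtype.val hx
    exact ⟨⟨x, LinearMap.mem_ker.2 h0⟩, rfl⟩
  have hwir : kerCxIncl (𝔻.d (n - 1) (n - 2)) ≫ ρ = 0 := by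
    refine HomologicalComplex.hom_ext _ _ fun m => ModuleCat.hom_ext <| LinearMap.ext fun x => Subtype.ext ?_
    exact (LinearMap.mem_ker.1 x.2 : _)
  have hGP : IsGorACProj (kerCx (𝔻.d (n - 2) (n - 3))) := gp_kerCx hAC (by ring)
  obtain ⟨g0, hg0⟩ := extend_of_ext1 (kerCxIncl (𝔻.d (n - 1) (n - 2))) fb ρ hwir
    hιinj hρsurj hexact (hY _ hGP)
  refine ⟨g0, ?_⟩
  calc f = kerCorestrict (𝔻.d (n - 1) (n - 2)) (𝔻.d n (n - 1)) (𝔻.d_comp_d _ _ _) ≫ fb :=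
        hfb.symm
    _ = kerCorestrict (𝔻.d (n - 1) (n - 2)) (𝔻.d n (n - 1)) (𝔻.d_comp_d _ _ _) ≫
        kerCxIncl (𝔻.d (n - 1) (n - 2)) ≫ g0 := by rw [hg0]
    _ = (kerCorestrict (𝔻.d (n - 1) (n - 2)) (𝔻.d n (n - 1)) (𝔻.d_comp_d _ _ _) ≫
        kerCxIncl (𝔻.d (n - 1) (n - 2))) ≫ g0 := (Category.assoc _ _ _).symm
    _ = 𝔻.d n (n - 1) ≫ g0 := by rw [kerCorestrict_incl]

end AuxPerpW
section AuxLevel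
variable {R : Type} [Ring R]

lemma ncRel_map_snd {M : Type} [AddCommGroup M] [Module Rᵐᵒᵖ M]
    {L L' : Type} [AddCommGroup L] [AddCommGroup L'] [Module R L] [Module R L']
    (ψ : L →ₗ[R] L') {z : TensorProduct ℤ M L} (hz : z ∈ ncRel R M L) :
    TensorProduct.map (LinearMap.id (R := ℤ) (M := M)) ψ.toAddMonoidHom.toIntLinearMap z
      ∈ ncRel R M L' := by
  set φ := (TensorProduct.map (LinearMap.id (R := ℤ) (M := M))
    ψ.toAddMonoidHom.toIntLinearMap).toAddMonoidHom with hφ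
  have h1 : (ncRel R M L).map φ ≤ ncRel R M L' := by
    rw [ncRel, AddMonoidHom.map_closure]
    refine (AddSubgroup.closure_le _).2 ?_
    rintro x ⟨y, ⟨r, m, nn, rfl⟩, rfl⟩
    refine AddSubgroup.subset_closure ⟨r, m, ψ nn, ?_⟩
    show φ ((MulOpposite.op r • m) ⊗ₜ[ℤ] nn - m ⊗ₜ[ℤ] (r • nn)) = _
    rw [hφ]
    show TensorProduct.map _ _ ((MulOpposite.op r • m) ⊗ₜ[ℤ] nn - m ⊗ₜ[ℤ] (r • nn)) = _
    rw [map_sub, TensorProduct.map_tmul, TensorProduct.map_tmul]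
    show (MulOpposite.op r • m) ⊗ₜ[ℤ] (ψ nn) - m ⊗ₜ[ℤ] (ψ (r • nn)) = _
    rw [map_smul]
  exact h1 ⟨z, hz, rfl⟩

lemma isLevel_retract {M N : ModuleCat R} (hN : IsLevel N) (s : M ⟶ N) (r : N ⟶ M)
    (hsr : s ≫ r = 𝟙 M) : IsLevel M := by
  intro K P F i p w hse hproj hfp z hz
  have h1 : TensorProduct.map i.hom.toAddMonoidHom.toIntLinearMap
        (LinearMap.id (R := ℤ) (M := ↑N))
        (TensorProduct.map (LinearMap.id (R := ℤ) (M := ↑K))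
          s.hom.toAddMonoidHom.toIntLinearMap z)
      = TensorProduct.map (LinearMap.id (R := ℤ) (M := ↑P))
          s.hom.toAddMonoidHom.toIntLinearMap
          (TensorProduct.map i.hom.toAddMonoidHom.toIntLinearMap
            (LinearMap.id (R := ℤ) (M := ↑M)) z) := by
    rw [← LinearMap.comp_apply, ← LinearMap.comp_apply, ← TensorProduct.map_comp,
      ← TensorProduct.map_comp, LinearMap.comp_id, LinearMap.id_comp, LinearMap.comp_id,
      LinearMap.id_comp]
  have h2 := ncRel_map_snd (M := ↑P) s.hom hz
  rw [← h1] at h2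
  have h3 := hN K P F i p w hse hproj hfp _ h2
  have h4 := ncRel_map_snd (M := ↑K) r.hom h3
  have h5 : TensorProduct.map (LinearMap.id (R := ℤ) (M := ↑K))
      r.hom.toAddMonoidHom.toIntLinearMap
      (TensorProduct.map (LinearMap.id (R := ℤ) (M := ↑K))
        s.hom.toAddMonoidHom.toIntLinearMap z) = z := by
    rw [← LinearMap.comp_apply, ← TensorProduct.map_comp, LinearMap.comp_id]
    have hcomp : r.hom.toAddMonoidHom.toIntLinearMap.comp s.hom.toAddMonoidHom.toIntLinearMap
        = LinearMap.id := by
      refine LinearMap.ext fun x => ?_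
      show r (s x) = x
      exact ConcreteCategory.congr_hom hsr x
    rw [hcomp, TensorProduct.map_id, LinearMap.id_apply]
  rw [← h5]
  exact h4

variable (R) in
noncomputable def muB0 (I : Type) {M : Type} [AddCommGroup M] [Module Rᵐᵒᵖ M] (m : M) :
    (I →₀ R) →+ (I →₀ M) :=
  Finsupp.liftAddHom (fun i =>
    AddMonoidHom.mk' (fun r => Finsupp.single i (MulOpposite.op r • m)) (fun a b => by
      show Finsupp.single i (MulOpposite.op (a + b) • m)
        = Finsupp.single i (MulOpposite.op a • m) + Finsupp.single i (MulOpposite.op b • m)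
      rw [MulOpposite.op_add, add_smul, Finsupp.single_add]))

lemma muB0_single (I : Type) {M : Type} [AddCommGroup M] [Module Rᵐᵒᵖ M] (m : M)
    (i : I) (r : R) :
    muB0 R I m (Finsupp.single i r) = Finsupp.single i (MulOpposite.op r • m) := by
  rw [muB0, Finsupp.liftAddHom_apply_single]
  rfl

variable (R) in
/-- The canonical additive map `M ⊗_ℤ R^(I) → M^(I)` inducing `M ⊗_R R^(I) ≅ M^(I)`. -/
noncomputable def muB (I : Type) (M : Type) [AddCommGroup M] [Module Rᵐᵒᵖ M] :
    M →ₗ[ℤ] ((I →₀ R) →ₗ[ℤ] (I →₀ M)) :=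
  (AddMonoidHom.mk' (fun m => ((muB0 R I m).toIntLinearMap : (I →₀ R) →ₗ[ℤ] (I →₀ M)))
    (fun m m' => by
      refine LinearMap.ext fun f => ?_
      show muB0 R I (m + m') f = muB0 R I m f + muB0 R I m' f
      induction f using Finsupp.induction_linear with
      | zero => simp
      | add f g hf hg => rw [map_add, map_add, map_add, hf, hg]; abel
      | single a b =>
        rw [muB0_single, muB0_single, muB0_single, smul_add, Finsupp.single_add])).toIntLinearMap

variable (R) in
noncomputable def mu (I : Type) (M : Type) [AddCommGroup M] [Module Rᵐᵒᵖ M] :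
    TensorProduct ℤ M (I →₀ R) →ₗ[ℤ] (I →₀ M) :=
  TensorProduct.lift (muB R I M)

lemma mu_tmul_single (I : Type) {M : Type} [AddCommGroup M] [Module Rᵐᵒᵖ M]
    (m : M) (i : I) (r : R) :
    mu R I M (m ⊗ₜ[ℤ] Finsupp.single i r) = Finsupp.single i (MulOpposite.op r • m) := by
  rw [mu]; erw [TensorProduct.lift.tmul]
  show muB0 R I m (Finsupp.single i r) = _
  rw [muB0_single]

lemma mu_ncRel (I : Type) (M : Type) [AddCommGroup M] [Module Rᵐᵒᵖ M]
    {z : TensorProduct ℤ M (I →₀ R)} (hz : z ∈ ncRel R M (I →₀ R)) : mu R I M z = 0 := by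
  have hle : ncRel R M (I →₀ R) ≤ (mu R I M).toAddMonoidHom.ker := by
    rw [ncRel]
    refine (AddSubgroup.closure_le _).2 ?_
    intro x hx
    obtain ⟨r, m, f, rfl⟩ := hx
    rw [SetLike.mem_coe, AddMonoidHom.mem_ker]
    show mu R I M ((MulOpposite.op r • m) ⊗ₜ[ℤ] f - m ⊗ₜ[ℤ] (r • f)) = 0
    rw [map_sub, sub_eq_zero]
    induction f using Finsupp.induction_linear with
    | zero => rw [TensorProduct.tmul_zero, smul_zero, TensorProduct.tmul_zero]
    | add f g hf hg =>
      rw [smul_add, TensorProduct.tmul_add, TensorProduct.tmul_add, map_add, map_add, hf, hg]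
    | single a b =>
      rw [Finsupp.smul_single, smul_eq_mul, mu_tmul_single, mu_tmul_single,
        MulOpposite.op_mul, mul_smul]
  exact AddMonoidHom.mem_ker.1 (hle hz)

lemma mu_natural (I : Type) {M M' : Type} [AddCommGroup M] [AddCommGroup M']
    [Module Rᵐᵒᵖ M] [Module Rᵐᵒᵖ M'] (φ : M →ₗ[Rᵐᵒᵖ] M')
    (z : TensorProduct ℤ M (I →₀ R)) :
    mu R I M' (TensorProduct.map φ.toAddMonoidHom.toIntLinearMap
      (LinearMap.id (R := ℤ) (M := (I →₀ R))) z)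
      = Finsupp.mapRange.addMonoidHom φ.toAddMonoidHom (mu R I M z) := by
  induction z using TensorProduct.induction_on with
  | zero => simp
  | add x y hx hy => simp only [map_add, hx, hy]
  | tmul m f =>
    rw [TensorProduct.map_tmul]
    induction f using Finsupp.induction_linear with
    | zero =>
      show mu R I M' (φ m ⊗ₜ[ℤ] (0 : I →₀ R)) = _
      rw [TensorProduct.tmul_zero, TensorProduct.tmul_zero, map_zero, map_zero, map_zero]
    | add f g hf hg =>
      show mu R I M' (φ m ⊗ₜ[ℤ] (f + g)) = _
      rw [TensorProduct.tmul_add, TensorProduct.tmul_add, map_add, map_add, map_add]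
      exact congrArg₂ (· + ·) hf hg
    | single a b =>
      show mu R I M' (φ m ⊗ₜ[ℤ] Finsupp.single a b) = _
      rw [mu_tmul_single, mu_tmul_single]
      show _ = Finsupp.mapRange ⇑φ.toAddMonoidHom φ.toAddMonoidHom.map_zero
        (Finsupp.single a (MulOpposite.op b • m))
      rw [Finsupp.mapRange_single]
      show Finsupp.single a (MulOpposite.op b • φ m) = Finsupp.single a (φ (MulOpposite.op b • m))
      rw [map_smul]

variable (R) in
noncomputable def rhoF (I : Type) (M : Type) [AddCommGroup M] [Module Rᵐᵒᵖ M] :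
    (I →₀ M) →+ TensorProduct ℤ M (I →₀ R) :=
  Finsupp.liftAddHom fun i => AddMonoidHom.mk'
    (fun m => m ⊗ₜ[ℤ] Finsupp.single i (1 : R)) (fun a b => TensorProduct.add_tmul a b _)

lemma sub_rho_mu_mem (I : Type) (M : Type) [AddCommGroup M] [Module Rᵐᵒᵖ M]
    (z : TensorProduct ℤ M (I →₀ R)) :
    z - rhoF R I M (mu R I M z) ∈ ncRel R M (I →₀ R) := by
  induction z using TensorProduct.induction_on with
  | zero => rw [map_zero, map_zero, sub_zero]; exact zero_mem _
  | add x y hx hy =>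
    have heq : (x + y) - rhoF R I M (mu R I M (x + y))
        = (x - rhoF R I M (mu R I M x)) + (y - rhoF R I M (mu R I M y)) := by
      rw [map_add, map_add]; abel
    rw [heq]
    exact add_mem hx hy
  | tmul m f =>
    induction f using Finsupp.induction_linear with
    | zero => rw [TensorProduct.tmul_zero, map_zero, map_zero, sub_zero]; exact zero_mem _
    | add f g hf hg =>
      have heq : m ⊗ₜ[ℤ] (f + g) - rhoF R I M (mu R I M (m ⊗ₜ[ℤ] (f + g)))
          = (m ⊗ₜ[ℤ] f - rhoF R I M (mu R I M (m ⊗ₜ[ℤ] f)))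
            + (m ⊗ₜ[ℤ] g - rhoF R I M (mu R I M (m ⊗ₜ[ℤ] g))) := by
        rw [TensorProduct.tmul_add, map_add, map_add]; abel
      rw [heq]
      exact add_mem hf hg
    | single a b =>
      rw [mu_tmul_single]
      have hrho : rhoF R I M (Finsupp.single a (MulOpposite.op b • m))
          = (MulOpposite.op b • m) ⊗ₜ[ℤ] Finsupp.single a (1 : R) := by
        rw [rhoF, Finsupp.liftAddHom_apply_single]
        rfl
      rw [hrho]
      have heq : m ⊗ₜ[ℤ] Finsupp.single a b
          - (MulOpposite.op b • m) ⊗ₜ[ℤ] Finsupp.single a (1 : R)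
          = -((MulOpposite.op b • m) ⊗ₜ[ℤ] Finsupp.single a (1 : R)
              - m ⊗ₜ[ℤ] (b • Finsupp.single a (1 : R))) := by
        rw [Finsupp.smul_single, smul_eq_mul, mul_one]; abel
      rw [heq]
      exact neg_mem (AddSubgroup.subset_closure ⟨b, m, Finsupp.single a 1, rfl⟩)

lemma isLevel_free (I : Type) : IsLevel (ModuleCat.of R (I →₀ R)) := by
  intro K P F i p w hse hproj hfp z hz
  haveI := hse.mono_f
  have hinj : Function.Injective i := (ModuleCat.mono_iff_injective i).1 inferInstance
  have h1 : mu R I ↑P (TensorProduct.map i.hom.toAddMonoidHom.toIntLinearMap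
      (LinearMap.id (R := ℤ)) z) = 0 := mu_ncRel I ↑P hz
  rw [mu_natural I i.hom z] at h1
  have h2 : mu R I ↑K z = 0 := by
    ext a
    have ha := DFunLike.congr_fun h1 a
    show (mu R I ↑K z) a = 0
    refine hinj ?_
    rw [map_zero]
    exact ha
  have h3 := sub_rho_mu_mem I ↑K z
  rw [h2, map_zero, sub_zero] at h3
  exact h3

end AuxLevel

section AuxQ
variable {R : Type} [Ring R]

/-- A direct sum of disks on free modules covering the components of `P`. -/
@[reducible] noncomputable def QCx (P : Ch R) : Ch R where
  X n := ModuleCat.of R ((↥(P.X n) →₀ R) × (↥(P.X (n + 1)) →₀ R))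
  d i j :=
    if h : j + 1 = i then
      ModuleCat.ofHom (LinearMap.fst R (↥(P.X i) →₀ R) (↥(P.X (i + 1)) →₀ R)) ≫
        eqToHom (by rw [h]) ≫
          ModuleCat.ofHom (LinearMap.inr R (↥(P.X j) →₀ R) (↥(P.X (j + 1)) →₀ R))
    else 0
  shape i j h := dif_neg (by simpa using h)
  d_comp_d' i j k hij hjk := by
    simp only [ComplexShape.down_Rel] at hij hjk
    rw [dif_pos hij, dif_pos hjk]
    have hz : ModuleCat.ofHom (LinearMap.inr R (↥(P.X j) →₀ R) (↥(P.X (j + 1)) →₀ R)) ≫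
        ModuleCat.ofHom (LinearMap.fst R (↥(P.X j) →₀ R) (↥(P.X (j + 1)) →₀ R)) = 0 :=
      ModuleCat.hom_ext <| LinearMap.ext fun x => rfl
    slice_lhs 3 4 => rw [hz]
    simp

lemma QCx_d_eq' (P : Ch R) {i j : ℤ} (h : j + 1 = i) :
    (QCx P).d i j = ModuleCat.ofHom (LinearMap.fst R (↥(P.X i) →₀ R) (↥(P.X (i + 1)) →₀ R)) ≫
      eqToHom (by rw [h]) ≫
        ModuleCat.ofHom (LinearMap.inr R (↥(P.X j) →₀ R) (↥(P.X (j + 1)) →₀ R)) := by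
  dsimp only [QCx]
  rw [dif_pos h]

lemma QCx_d_eq (P : Ch R) (j : ℤ) :
    (QCx P).d (j + 1) j
      = ModuleCat.ofHom (LinearMap.fst R (↥(P.X (j + 1)) →₀ R) (↥(P.X (j + 1 + 1)) →₀ R)) ≫
        ModuleCat.ofHom (LinearMap.inr R (↥(P.X j) →₀ R) (↥(P.X (j + 1)) →₀ R)) := by
  rw [QCx_d_eq' P rfl, eqToHom_refl, Category.id_comp]

lemma QCx_inr_d (P : Ch R) (i j : ℤ) :
    ModuleCat.ofHom (LinearMap.inr R (↥(P.X i) →₀ R) (↥(P.X (i + 1)) →₀ R)) ≫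
      (QCx P).d i j = 0 := by
  by_cases h : j + 1 = i
  · rw [QCx_d_eq' P h, ← Category.assoc,
      show ModuleCat.ofHom (LinearMap.inr R (↥(P.X i) →₀ R) (↥(P.X (i + 1)) →₀ R)) ≫
        ModuleCat.ofHom (LinearMap.fst R (↥(P.X i) →₀ R) (↥(P.X (i + 1)) →₀ R)) = 0 from
        ModuleCat.hom_ext <| LinearMap.ext fun x => rfl, zero_comp]
  · rw [show (QCx P).d i j = 0 from dif_neg h, comp_zero]

lemma QCx_exact_gen (P : Ch R) (j : ℤ) :
    (ShortComplex.mk ((QCx P).d (j + 1 + 1) (j + 1)) ((QCx P).d (j + 1) j)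
      ((QCx P).d_comp_d _ _ _)).Exact := by
  rw [ShortComplex.moduleCat_exact_iff]
  intro x hx
  have hx' : ((QCx P).d (j + 1) j) x = 0 := hx
  rw [QCx_d_eq P j] at hx'
  have h1 : x.1 = 0 := congrArg Prod.snd hx'
  refine ⟨(x.2, 0), ?_⟩
  show ((QCx P).d (j + 1 + 1) (j + 1)) ((x.2, (0 : ↥(P.X (j + 1 + 1 + 1)) →₀ R))) = x
  rw [QCx_d_eq P (j + 1)]
  exact Prod.ext h1.symm rfl

lemma QCx_exactAt (P : Ch R) (n : ℤ) : (QCx P).ExactAt n := by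
  rw [HomologicalComplex.exactAt_iff' (QCx P) (n + 1) n (n - 1)
    (ChainComplex.prev ℤ n) (ChainComplex.next ℤ n)]
  exact sc'_exact_congr (QCx P) (show n - 1 + 1 + 1 = n + 1 by ring)
    (show n - 1 + 1 = n by ring) (rfl : (n - 1 : ℤ) = n - 1) (QCx_exact_gen P (n - 1))

lemma QCx_iCycles_fst (P : Ch R) (n : ℤ) :
    (QCx P).iCycles n ≫ ModuleCat.ofHom
      (LinearMap.fst R (↥(P.X n) →₀ R) (↥(P.X (n + 1)) →₀ R)) = 0 := by
  haveI : Mono (ModuleCat.ofHom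
      (LinearMap.inr R (↥(P.X (n - 1)) →₀ R) (↥(P.X (n - 1 + 1)) →₀ R))) :=
    (ModuleCat.mono_iff_injective _).2 (fun a b hab => congrArg Prod.snd hab)
  haveI : Mono (eqToHom (show ModuleCat.of R (↥(P.X n) →₀ R)
      = ModuleCat.of R (↥(P.X (n - 1 + 1)) →₀ R) by rw [show (n - 1 + 1 : ℤ) = n by ring]) ≫
      ModuleCat.ofHom (LinearMap.inr R (↥(P.X (n - 1)) →₀ R) (↥(P.X (n - 1 + 1)) →₀ R))) :=
    mono_comp _ _
  have h0 : (QCx P).iCycles n ≫ (QCx P).d n (n - 1) = 0 := (QCx P).iCycles_d n (n - 1)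
  rw [QCx_d_eq' P (show (n - 1) + 1 = n by ring)] at h0
  rw [← cancel_mono (eqToHom (show ModuleCat.of R (↥(P.X n) →₀ R)
      = ModuleCat.of R (↥(P.X (n - 1 + 1)) →₀ R) by rw [show (n - 1 + 1 : ℤ) = n by ring]) ≫
      ModuleCat.ofHom (LinearMap.inr R (↥(P.X (n - 1)) →₀ R) (↥(P.X (n - 1 + 1)) →₀ R))),
    zero_comp, Category.assoc]
  exact h0

noncomputable def QCx_cyclesIso (P : Ch R) (n : ℤ) :
    (QCx P).cycles n ≅ ModuleCat.of R (↥(P.X (n + 1)) →₀ R) where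
  hom := (QCx P).iCycles n ≫ ModuleCat.ofHom
    (LinearMap.snd R (↥(P.X n) →₀ R) (↥(P.X (n + 1)) →₀ R))
  inv := (QCx P).liftCycles (ModuleCat.ofHom
      (LinearMap.inr R (↥(P.X n) →₀ R) (↥(P.X (n + 1)) →₀ R))) (n - 1)
    (ChainComplex.next ℤ n) (QCx_inr_d P n (n - 1))
  hom_inv_id := by
    rw [← cancel_mono ((QCx P).iCycles n), Category.assoc, Category.assoc,
      HomologicalComplex.liftCycles_i, Category.id_comp]
    have h0 := QCx_iCycles_fst P n
    refine ModuleCat.hom_ext <| LinearMap.ext fun x => ?_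
    have h1 : (LinearMap.fst R (↥(P.X n) →₀ R) (↥(P.X (n + 1)) →₀ R))
        (((QCx P).iCycles n) x) = 0 := ConcreteCategory.congr_hom h0 x
    show ((0 : ↥(P.X n) →₀ R), (((QCx P).iCycles n) x).2) = ((QCx P).iCycles n) x
    exact Prod.ext h1.symm rfl
  inv_hom_id := by
    rw [← Category.assoc, HomologicalComplex.liftCycles_i]
    exact ModuleCat.hom_ext <| LinearMap.ext fun x => rfl

lemma QCx_isLevel (P : Ch R) : IsLevelComplex (QCx P) := by
  refine ⟨QCx_exactAt P, fun n => ?_⟩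
  exact isLevel_retract (isLevel_free (↥(P.X (n + 1)))) (QCx_cyclesIso P n).hom
    (QCx_cyclesIso P n).inv ((QCx_cyclesIso P n).hom_inv_id)

noncomputable def QCx_proj (P : Ch R) : QCx P ⟶ P where
  f n := by
    exact ModuleCat.ofHom <| (Finsupp.linearCombination R (id : ↥(P.X n) → ↥(P.X n))).comp
        (LinearMap.fst R (↥(P.X n) →₀ R) (↥(P.X (n + 1)) →₀ R))
      + ((P.d (n + 1) n).hom.comp
          ((Finsupp.linearCombination R (id : ↥(P.X (n + 1)) → ↥(P.X (n + 1)))).comp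
            (LinearMap.snd R (↥(P.X n) →₀ R) (↥(P.X (n + 1)) →₀ R))))
  comm' i j hij := by
    simp only [ComplexShape.down_Rel] at hij
    subst hij
    rw [QCx_d_eq P j]
    refine ModuleCat.hom_ext <| LinearMap.ext fun x => ?_
    have h1 : P.d (j + 1) j (P.d (j + 1 + 1) (j + 1)
        ((Finsupp.linearCombination R id) x.2)) = 0 :=
      ConcreteCategory.congr_hom (P.d_comp_d (j + 1 + 1) (j + 1) j) _
    show P.d (j + 1) j ((Finsupp.linearCombination R id) x.1
        + P.d (j + 1 + 1) (j + 1) ((Finsupp.linearCombination R id) x.2))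
      = (Finsupp.linearCombination R id) (0 : ↥(P.X j) →₀ R)
        + P.d (j + 1) j ((Finsupp.linearCombination R id) x.1)
    rw [map_add, h1, add_zero, map_zero, zero_add]

lemma QCx_proj_surj (P : Ch R) (n : ℤ) : Function.Surjective ((QCx_proj P).f n) := by
  intro x
  refine ⟨(Finsupp.single x 1, 0), ?_⟩
  show (Finsupp.linearCombination R id) (Finsupp.single x (1 : R))
      + P.d (n + 1) n ((Finsupp.linearCombination R id) (0 : ↥(P.X (n + 1)) →₀ R)) = x
  rw [Finsupp.linearCombination_single, one_smul, map_zero, map_zero, add_zero]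
  rfl

lemma proj_mem_wclass (P : Ch R) (hP : Projective P) : P ∈ WClass R := by
  haveI := hP
  haveI : Epi (QCx_proj P) := chEpi_of_surj _ (QCx_proj_surj P)
  intro 𝔻 hAC
  exact homInto_retract (hAC.2.2 (QCx P) (QCx_isLevel P))
    (Projective.factorThru (𝟙 P) (QCx_proj P)) (QCx_proj P)
    (Projective.factorThru_comp _ _)

end AuxQ
/-- `GP^⊥` is thick and contains all projective chain complexes. -/
theorem perp_of_gorACProj_thick_and_contains_projectives (R : Type) [Ring R] :
    IsThick (rightPerp {X : Ch R | IsGorACProj X}) ∧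
      ∀ P : Ch R, Projective P → P ∈ rightPerp {X : Ch R | IsGorACProj X} := by
  constructor
  · constructor
    · rintro A B ⟨s, r, hsr⟩ hB
      refine wclass_subset_perp ?_
      intro 𝔻 h𝔻
      exact homInto_retract (perp_subset_wclass hB 𝔻 h𝔻) s r hsr
    · intro S hS
      refine ⟨?_, ?_, ?_⟩
      · intro h1 h2
        refine wclass_subset_perp ?_
        intro 𝔻 h𝔻
        exact homInto_two_of_three_right h𝔻 hS (perp_subset_wclass h1 𝔻 h𝔻)
          (perp_subset_wclass h2 𝔻 h𝔻)
      · intro h1 h3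
        refine wclass_subset_perp ?_
        intro 𝔻 h𝔻
        exact homInto_two_of_three_mid h𝔻 hS (perp_subset_wclass h1 𝔻 h𝔻)
          (perp_subset_wclass h3 𝔻 h𝔻)
      · intro h2 h3
        refine wclass_subset_perp ?_
        intro 𝔻 h𝔻
        exact homInto_two_of_three_left h𝔻 hS (perp_subset_wclass h2 𝔻 h𝔻)
          (perp_subset_wclass h3 𝔻 h𝔻)
  · intro P hP
    exact wclass_subset_perp (proj_mem_wclass P hP)

end GorensteinAC
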